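/- The mean map τ_* : ℝ^p → (0,1)^p of an exponential family on {0,1}^p with strictly positive weight h is a bijection onto the open cube (0,1)^p. -/

import Mathlib

open Finset

/-- Value of a Boolean coordinate as a real number. -/
noncomputable def bval (b : Bool) : ℝ := if b then 1 else 0

/-- Scalar product `⟨θ, x⟩` for `x ∈ {0,1}^p`. -/
noncomputable def ip {p : ℕ} (θ : Fin p → ℝ) (x : Fin p → Bool) : ℝ :=
  ∑ i, θ i * bval (x i)

/-- Partition function `Z(θ)`. -/
noncomputable def Zfun {p : ℕ} (h : (Fin p → Bool) → ℝ) (θ : Fin p → ℝ) : ℝ :=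
  ∑ x : Fin p → Bool, h x * Real.exp (ip θ x)

/-- Log-partition function `A(θ)`. -/
noncomputable def Afun {p : ℕ} (h : (Fin p → Bool) → ℝ) (θ : Fin p → ℝ) : ℝ :=
  Real.log (Zfun h θ)

/-- Density `p_θ(x)` of the exponential family. -/
noncomputable def pdens {p : ℕ} (h : (Fin p → Bool) → ℝ) (θ : Fin p → ℝ)
    (x : Fin p → Bool) : ℝ :=
  h x * Real.exp (ip θ x) / Zfun h θ

/-- Mean `τ_*(θ)_i = E_θ[X_i]`. -/
noncomputable def meanMap {p : ℕ} (h : (Fin p → Bool) → ℝ) (θ : Fin p → ℝ) (i : Fin p) : ℝ :=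
  ∑ x : Fin p → Bool, bval (x i) * pdens h θ x

noncomputable def w {p : ℕ} (h : (Fin p → Bool) → ℝ) (θ : Fin p → ℝ) (x : Fin p → Bool) : ℝ :=
  h x * Real.exp (ip θ x)

lemma bval_nonneg (b : Bool) : 0 ≤ bval b := by unfold bval; split <;> norm_num
lemma bval_le_one (b : Bool) : bval b ≤ 1 := by unfold bval; split <;> norm_num

lemma w_pos {p : ℕ} {h : (Fin p → Bool) → ℝ} (hpos : ∀ x, 0 < h x) (θ : Fin p → ℝ)
    (x : Fin p → Bool) : 0 < w h θ x := mul_pos (hpos x) (Real.exp_pos _)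

lemma Zfun_pos {p : ℕ} {h : (Fin p → Bool) → ℝ} (hpos : ∀ x, 0 < h x) (θ : Fin p → ℝ) :
    0 < Zfun h θ :=
  Finset.sum_pos (fun x _ => mul_pos (hpos x) (Real.exp_pos _)) univ_nonempty

lemma meanMap_eq {p : ℕ} (h : (Fin p → Bool) → ℝ) (θ : Fin p → ℝ) (i : Fin p) :
    meanMap h θ i = (∑ x : Fin p → Bool, bval (x i) * w h θ x) / Zfun h θ := by
  unfold meanMap pdens w
  rw [Finset.sum_div]
  exact Finset.sum_congr rfl fun x _ => by ring

lemma meanMap_mem {p : ℕ} (h : (Fin p → Bool) → ℝ) (hpos : ∀ x, 0 < h x)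
    (θ : Fin p → ℝ) (i : Fin p) : meanMap h θ i ∈ Set.Ioo (0 : ℝ) 1 := by
  rw [meanMap_eq]
  constructor
  · apply div_pos _ (Zfun_pos hpos θ)
    apply Finset.sum_pos'
    · exact fun x _ => mul_nonneg (bval_nonneg _) (w_pos hpos θ x).le
    · refine ⟨fun _ => true, Finset.mem_univ _, ?_⟩
      simp [bval, w_pos hpos θ]
  · rw [div_lt_one (Zfun_pos hpos θ)]
    unfold Zfun
    apply Finset.sum_lt_sum
    · intro x _
      calc bval (x i) * w h θ x ≤ 1 * w h θ x :=
            mul_le_mul_of_nonneg_right (bval_le_one _) (w_pos hpos θ x).le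
        _ = h x * Real.exp (ip θ x) := by rw [one_mul]; rfl
    · refine ⟨fun _ => false, Finset.mem_univ _, ?_⟩
      simp [bval, w]
      exact mul_pos (hpos _) (Real.exp_pos _)

lemma ip_sub_add {p : ℕ} (θ1 θ2 : Fin p → ℝ) (x : Fin p → Bool) :
    ip θ1 x = ip θ2 x + ip (θ1 - θ2) x := by
  unfold ip
  rw [← Finset.sum_add_distrib]
  exact Finset.sum_congr rfl fun i _ => by simp [Pi.sub_apply]; ring

lemma w_eq {p : ℕ} (h : (Fin p → Bool) → ℝ) (θ1 θ2 : Fin p → ℝ) (x : Fin p → Bool) :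
    w h θ1 x = w h θ2 x * Real.exp (ip (θ1 - θ2) x) := by
  unfold w
  rw [ip_sub_add θ1 θ2 x, Real.exp_add]
  ring

lemma dot_meanMap {p : ℕ} (h : (Fin p → Bool) → ℝ) (θ v : Fin p → ℝ) :
    ∑ i, meanMap h θ i * v i = (∑ x : Fin p → Bool, ip v x * w h θ x) / Zfun h θ := by
  simp only [meanMap_eq, div_mul_eq_mul_div, ← Finset.sum_div]
  congr 1
  calc ∑ i, (∑ x : Fin p → Bool, bval (x i) * w h θ x) * v i
      = ∑ i, ∑ x : Fin p → Bool, (v i * bval (x i)) * w h θ x := by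
        refine Finset.sum_congr rfl fun i _ => ?_
        rw [Finset.sum_mul]
        exact Finset.sum_congr rfl fun x _ => by ring
    _ = ∑ x : Fin p → Bool, ∑ i, (v i * bval (x i)) * w h θ x := Finset.sum_comm
    _ = ∑ x : Fin p → Bool, ip v x * w h θ x := by
        refine Finset.sum_congr rfl fun x _ => ?_
        rw [← Finset.sum_mul]
        rfl

lemma chebyshev_key {p : ℕ} (u a : (Fin p → Bool) → ℝ) :
    (∑ x : Fin p → Bool, ∑ y : Fin p → Bool,
        u x * u y * ((a x - a y) * (Real.exp (a x) - Real.exp (a y))))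
      = 2 * ((∑ x : Fin p → Bool, a x * u x * Real.exp (a x)) * (∑ x : Fin p → Bool, u x)
           - (∑ x : Fin p → Bool, a x * u x) * (∑ x : Fin p → Bool, u x * Real.exp (a x))) := by
  set T1 := ∑ x : Fin p → Bool, a x * u x * Real.exp (a x) with hT1
  set T2 := ∑ x : Fin p → Bool, u x with hT2
  set T3 := ∑ x : Fin p → Bool, a x * u x with hT3
  set T4 := ∑ x : Fin p → Bool, u x * Real.exp (a x) with hT4
  have inner : ∀ x, (∑ y : Fin p → Bool,
      u x * u y * ((a x - a y) * (Real.exp (a x) - Real.exp (a y))))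
      = u x * (a x * Real.exp (a x) * T2 - a x * T4 - T3 * Real.exp (a x) + T1) := by
    intro x
    have e : ∀ y, u x * u y * ((a x - a y) * (Real.exp (a x) - Real.exp (a y)))
        = (u x * (a x * Real.exp (a x))) * u y
          - (u x * a x) * (u y * Real.exp (a y))
          - (u x * Real.exp (a x)) * (a y * u y)
          + u x * (a y * u y * Real.exp (a y)) := fun y => by ring
    simp only [e, Finset.sum_add_distrib, Finset.sum_sub_distrib, ← Finset.mul_sum,
      ← hT1, ← hT2, ← hT3, ← hT4]
    ring
  simp only [inner]
  have e2 : ∀ x, u x * (a x * Real.exp (a x) * T2 - a x * T4 - T3 * Real.exp (a x) + T1)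
      = T2 * (a x * u x * Real.exp (a x)) - T4 * (a x * u x)
        - T3 * (u x * Real.exp (a x)) + T1 * u x := fun x => by ring
  simp only [e2, Finset.sum_add_distrib, Finset.sum_sub_distrib, ← Finset.mul_sum,
    ← hT1, ← hT2, ← hT3, ← hT4]
  ring

lemma term_nonneg (s t : ℝ) : 0 ≤ (s - t) * (Real.exp s - Real.exp t) := by
  rcases le_total s t with hst | hst
  · have h1 : Real.exp s ≤ Real.exp t := Real.exp_le_exp.2 hst
    nlinarith
  · exact mul_nonneg (by linarith) (by linarith [Real.exp_le_exp.2 hst])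

lemma term_pos {s t : ℝ} (hne : s ≠ t) : 0 < (s - t) * (Real.exp s - Real.exp t) := by
  rcases lt_or_gt_of_ne hne with hst | hst
  · have := Real.exp_lt_exp.2 hst
    exact mul_pos_of_neg_of_neg (by linarith) (by linarith)
  · have := Real.exp_lt_exp.2 hst
    exact mul_pos (by linarith) (by linarith)

lemma ip_false {p : ℕ} (v : Fin p → ℝ) : ip v (fun _ => false) = 0 := by
  simp [ip, bval]

lemma ip_single {p : ℕ} (v : Fin p → ℝ) (i : Fin p) :
    ip v (fun j => decide (j = i)) = v i := by
  unfold ip bval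
  rw [Finset.sum_eq_single i]
  · simp
  · intro j _ hj; simp [hj]
  · intro hi; exact absurd (Finset.mem_univ i) hi

lemma D_pos {p : ℕ} (u : (Fin p → Bool) → ℝ) (hu : ∀ x, 0 < u x)
    (v : Fin p → ℝ) (hv : v ≠ 0) :
    0 < ∑ x : Fin p → Bool, ∑ y : Fin p → Bool,
        u x * u y * ((ip v x - ip v y) * (Real.exp (ip v x) - Real.exp (ip v y))) := by
  obtain ⟨i, hi⟩ := Function.ne_iff.1 hv
  apply Finset.sum_pos'
  · intro x _
    exact Finset.sum_nonneg fun y _ =>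
      mul_nonneg (mul_nonneg (hu x).le (hu y).le) (term_nonneg _ _)
  · refine ⟨fun j => decide (j = i), Finset.mem_univ _, ?_⟩
    apply Finset.sum_pos'
    · intro y _
      exact mul_nonneg (mul_nonneg (hu _).le (hu y).le) (term_nonneg _ _)
    · refine ⟨fun _ => false, Finset.mem_univ _, ?_⟩
      apply mul_pos (mul_pos (hu _) (hu _))
      apply term_pos
      rw [ip_single, ip_false]
      simpa using hi

lemma pairing_pos {p : ℕ} (h : (Fin p → Bool) → ℝ) (hpos : ∀ x, 0 < h x)
    {θ1 θ2 : Fin p → ℝ} (hne : θ1 ≠ θ2) :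
    0 < ∑ i, (meanMap h θ1 i - meanMap h θ2 i) * (θ1 i - θ2 i) := by
  set v : Fin p → ℝ := θ1 - θ2 with hv
  have hvne : v ≠ 0 := sub_ne_zero.2 hne
  set u : (Fin p → Bool) → ℝ := w h θ2 with hu
  have hupos : ∀ x, 0 < u x := w_pos hpos θ2
  have key := chebyshev_key u (fun x => ip v x)
  have hD := D_pos u hupos v hvne
  rw [key] at hD
  set T1 := ∑ x : Fin p → Bool, ip v x * u x * Real.exp (ip v x) with hT1
  set T2 := ∑ x : Fin p → Bool, u x with hT2
  set T3 := ∑ x : Fin p → Bool, ip v x * u x with hT3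
  set T4 := ∑ x : Fin p → Bool, u x * Real.exp (ip v x) with hT4
  have hT2pos : 0 < T2 := Finset.sum_pos (fun x _ => hupos x) Finset.univ_nonempty
  have hT4pos : 0 < T4 :=
    Finset.sum_pos (fun x _ => mul_pos (hupos x) (Real.exp_pos _)) Finset.univ_nonempty
  have hlt : T3 * T4 < T1 * T2 := by nlinarith
  have hZ2 : Zfun h θ2 = T2 := rfl
  have hZ1 : Zfun h θ1 = T4 := by
    unfold Zfun
    exact Finset.sum_congr rfl fun x _ => w_eq h θ1 θ2 x
  have hnum1 : (∑ x : Fin p → Bool, ip v x * w h θ1 x) = T1 := by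
    rw [hT1]
    exact Finset.sum_congr rfl fun x _ => by rw [w_eq h θ1 θ2 x]; ring
  have hnum2 : (∑ x : Fin p → Bool, ip v x * w h θ2 x) = T3 := rfl
  have e : ∑ i, (meanMap h θ1 i - meanMap h θ2 i) * (θ1 i - θ2 i)
      = (∑ i, meanMap h θ1 i * v i) - ∑ i, meanMap h θ2 i * v i := by
    rw [← Finset.sum_sub_distrib]
    exact Finset.sum_congr rfl fun i _ => by simp [hv, Pi.sub_apply]; ring
  rw [e, dot_meanMap, dot_meanMap, hnum1, hnum2, hZ1, hZ2, sub_pos,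
    div_lt_div_iff₀ hT2pos hT4pos]
  exact hlt

lemma meanMap_injective {p : ℕ} (h : (Fin p → Bool) → ℝ) (hpos : ∀ x, 0 < h x)
    {θ1 θ2 : Fin p → ℝ} (heq : meanMap h θ1 = meanMap h θ2) : θ1 = θ2 := by
  by_contra hne
  have := pairing_pos h hpos hne
  rw [heq] at this
  simp at this

-- objective function
noncomputable def Ffun {p : ℕ} (h : (Fin p → Bool) → ℝ) (τ : Fin p → ℝ) (θ : Fin p → ℝ) : ℝ :=
  Afun h θ - ∑ i, θ i * τ i

lemma ip_continuous {p : ℕ} (x : Fin p → Bool) : Continuous fun θ : Fin p → ℝ => ip θ x := by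
  unfold ip
  exact continuous_finset_sum _ fun i _ => (continuous_apply i).mul continuous_const

lemma Ffun_continuous {p : ℕ} (h : (Fin p → Bool) → ℝ) (hpos : ∀ x, 0 < h x)
    (τ : Fin p → ℝ) : Continuous (Ffun h τ) := by
  unfold Ffun Afun
  apply Continuous.sub
  · apply Continuous.log
    · exact continuous_finset_sum _ fun x _ =>
        continuous_const.mul ((ip_continuous x).rexp)
    · exact fun θ => (Zfun_pos hpos θ).ne'
  · exact continuous_finset_sum _ fun i _ => (continuous_apply i).mul continuous_const

lemma Ffun_lower {p : ℕ} (hp : 1 ≤ p) (h : (Fin p → Bool) → ℝ) (hpos : ∀ x, 0 < h x)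
    (τ : Fin p → ℝ) (hτ : ∀ i, τ i ∈ Set.Ioo (0 : ℝ) 1) :
    ∃ c : ℝ, 0 < c ∧ ∃ m : ℝ, ∀ θ : Fin p → ℝ, m + c * ‖θ‖ ≤ Ffun h τ θ := by
  have hne : (Finset.univ : Finset (Fin p)).Nonempty := by
    have : Nonempty (Fin p) := ⟨⟨0, hp⟩⟩
    exact Finset.univ_nonempty
  set c := Finset.univ.inf' hne (fun i => min (τ i) (1 - τ i)) with hc
  have hcpos : 0 < c := by
    rw [hc, Finset.lt_inf'_iff]
    intro i _
    exact lt_min (hτ i).1 (by linarith [(hτ i).2])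
  refine ⟨c, hcpos, Finset.univ.inf' Finset.univ_nonempty (fun x => Real.log (h x)), ?_⟩
  intro θ
  set m := Finset.univ.inf' Finset.univ_nonempty (fun x : Fin p → Bool => Real.log (h x)) with hm
  set x0 : Fin p → Bool := fun i => decide (0 < θ i) with hx0
  -- log Z ≥ log h x0 + ip θ x0
  have hZge : h x0 * Real.exp (ip θ x0) ≤ Zfun h θ :=
    Finset.single_le_sum (f := fun x => h x * Real.exp (ip θ x))
      (fun x _ => (mul_pos (hpos x) (Real.exp_pos _)).le) (Finset.mem_univ x0)
  have h1 : Real.log (h x0) + ip θ x0 ≤ Afun h θ := by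
    have := Real.log_le_log (mul_pos (hpos x0) (Real.exp_pos _)) hZge
    rwa [Real.log_mul (hpos x0).ne' (Real.exp_pos _).ne', Real.log_exp] at this
  have h2 : ip θ x0 = ∑ i, max (θ i) 0 := by
    unfold ip
    refine Finset.sum_congr rfl fun i _ => ?_
    rw [hx0]
    rcases lt_or_ge 0 (θ i) with hi | hi
    · simp [bval, hi, max_eq_left hi.le]
    · simp [bval, not_lt.2 hi, max_eq_right hi]
  have h3 : ∀ i, c * |θ i| ≤ max (θ i) 0 - θ i * τ i := by
    intro i
    have hc1 : c ≤ τ i := (Finset.inf'_le _ (Finset.mem_univ i)).trans (min_le_left _ _)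
    have hc2 : c ≤ 1 - τ i := (Finset.inf'_le _ (Finset.mem_univ i)).trans (min_le_right _ _)
    rcases le_or_gt 0 (θ i) with hi | hi
    · rw [abs_of_nonneg hi, max_eq_left hi]
      nlinarith
    · rw [abs_of_neg hi, max_eq_right hi.le]
      nlinarith
  have hnorm : ‖θ‖ ≤ ∑ i, |θ i| := by
    refine (pi_norm_le_iff_of_nonneg (Finset.sum_nonneg fun i _ => abs_nonneg _)).2 fun i => ?_
    rw [Real.norm_eq_abs]
    exact Finset.single_le_sum (fun j _ => abs_nonneg (θ j)) (Finset.mem_univ i)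
  have hmle : m ≤ Real.log (h x0) := Finset.inf'_le _ (Finset.mem_univ x0)
  have chain : m + c * ‖θ‖ ≤ Real.log (h x0) + ∑ i, (max (θ i) 0 - θ i * τ i) := by
    have : c * ‖θ‖ ≤ ∑ i, (max (θ i) 0 - θ i * τ i) := by
      calc c * ‖θ‖ ≤ c * ∑ i, |θ i| := by
            exact mul_le_mul_of_nonneg_left hnorm hcpos.le
        _ = ∑ i, c * |θ i| := Finset.mul_sum _ _ _
        _ ≤ ∑ i, (max (θ i) 0 - θ i * τ i) := Finset.sum_le_sum fun i _ => h3 i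
    linarith
  calc m + c * ‖θ‖ ≤ Real.log (h x0) + ∑ i, (max (θ i) 0 - θ i * τ i) := chain
    _ = Real.log (h x0) + ip θ x0 - ∑ i, θ i * τ i := by
        rw [Finset.sum_sub_distrib, h2]; ring
    _ ≤ Ffun h τ θ := by unfold Ffun; linarith

lemma ip_shift {p : ℕ} (θ : Fin p → ℝ) (i : Fin p) (t : ℝ) (x : Fin p → Bool) :
    ip (θ + t • (Pi.single i 1 : Fin p → ℝ)) x = ip θ x + t * bval (x i) := by
  unfold ip
  simp only [Pi.add_apply, Pi.smul_apply, smul_eq_mul]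
  have e : ∀ j, (θ j + t * (Pi.single i 1 : Fin p → ℝ) j) * bval (x j)
      = θ j * bval (x j) + t * ((Pi.single i 1 : Fin p → ℝ) j * bval (x j)) := fun j => by ring
  simp only [e, Finset.sum_add_distrib, ← Finset.mul_sum]
  congr 2
  rw [Finset.sum_eq_single i]
  · simp
  · intro j _ hj; simp [Pi.single_eq_of_ne hj]
  · intro hi; exact absurd (Finset.mem_univ i) hi

lemma lin_shift {p : ℕ} (θ τ : Fin p → ℝ) (i : Fin p) (t : ℝ) :
    ∑ j, (θ + t • (Pi.single i 1 : Fin p → ℝ)) j * τ j = (∑ j, θ j * τ j) + t * τ i := by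
  simp only [Pi.add_apply, Pi.smul_apply, smul_eq_mul]
  have e : ∀ j, (θ j + t * (Pi.single i 1 : Fin p → ℝ) j) * τ j
      = θ j * τ j + t * ((Pi.single i 1 : Fin p → ℝ) j * τ j) := fun j => by ring
  simp only [e, Finset.sum_add_distrib, ← Finset.mul_sum]
  congr 2
  rw [Finset.sum_eq_single i]
  · simp
  · intro j _ hj; simp [Pi.single_eq_of_ne hj]
  · intro hi; exact absurd (Finset.mem_univ i) hi

lemma hasDerivAt_line {p : ℕ} (h : (Fin p → Bool) → ℝ) (hpos : ∀ x, 0 < h x)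
    (τ : Fin p → ℝ) (θ : Fin p → ℝ) (i : Fin p) :
    HasDerivAt (fun t : ℝ => Ffun h τ (θ + t • (Pi.single i 1 : Fin p → ℝ))) (meanMap h θ i - τ i) 0 := by
  have hF : (fun t : ℝ => Ffun h τ (θ + t • (Pi.single i 1 : Fin p → ℝ)))
      = fun t => Real.log (∑ x : Fin p → Bool, h x * Real.exp (ip θ x + t * bval (x i)))
          - ((∑ j, θ j * τ j) + t * τ i) := by
    funext t
    unfold Ffun Afun Zfun
    rw [lin_shift]
    congr 2
    exact Finset.sum_congr rfl fun x _ => by rw [ip_shift]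
  rw [hF]
  have hN : HasDerivAt
      (fun t : ℝ => ∑ x : Fin p → Bool, h x * Real.exp (ip θ x + t * bval (x i)))
      (∑ x : Fin p → Bool, bval (x i) * w h θ x) 0 := by
    apply HasDerivAt.fun_sum
    intro x _
    have h1 : HasDerivAt (fun t : ℝ => ip θ x + t * bval (x i)) (bval (x i)) 0 :=
      (hasDerivAt_mul_const _).const_add _
    have h2 := (h1.exp).const_mul (h x)
    refine h2.congr_deriv ?_
    simp [w]
    ring
  have hN0 : (∑ x : Fin p → Bool, h x * Real.exp (ip θ x + (0:ℝ) * bval (x i))) = Zfun h θ := by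
    unfold Zfun
    exact Finset.sum_congr rfl fun x _ => by norm_num
  have hlog := hN.log (by rw [hN0]; exact (Zfun_pos hpos θ).ne')
  have hlin : HasDerivAt (fun t : ℝ => (∑ j, θ j * τ j) + t * τ i) (τ i) 0 :=
    (hasDerivAt_mul_const _).const_add _
  have := hlog.fun_sub hlin
  refine this.congr_deriv ?_
  rw [meanMap_eq, hN0]

lemma exists_theta {p : ℕ} (hp : 1 ≤ p) (h : (Fin p → Bool) → ℝ) (hpos : ∀ x, 0 < h x)
    (τ : Fin p → ℝ) (hτ : ∀ i, τ i ∈ Set.Ioo (0 : ℝ) 1) :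
    ∃ θ : Fin p → ℝ, meanMap h θ = τ := by
  obtain ⟨c, hc, m, hlow⟩ := Ffun_lower hp h hpos τ hτ
  set F := Ffun h τ with hF
  set R : ℝ := max ((F 0 - m + 1) / c) 0 with hR
  have hRnn : 0 ≤ R := le_max_right _ _
  have hcomp : IsCompact (Metric.closedBall (0 : Fin p → ℝ) R) := isCompact_closedBall _ _
  have h0mem : (0 : Fin p → ℝ) ∈ Metric.closedBall (0 : Fin p → ℝ) R := by
    simpa [Metric.mem_closedBall] using hRnn
  obtain ⟨θ0, hθ0mem, hmin⟩ := hcomp.exists_isMinOn ⟨0, h0mem⟩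
    ((Ffun_continuous h hpos τ).continuousOn)
  have hglobal : ∀ θ, F θ0 ≤ F θ := by
    intro θ
    by_cases hθ : θ ∈ Metric.closedBall (0 : Fin p → ℝ) R
    · exact isMinOn_iff.1 hmin θ hθ
    · have hRlt : R < ‖θ‖ := by
        simpa [Metric.mem_closedBall, dist_zero_right, not_le] using hθ
      have h1 : (F 0 - m + 1) / c ≤ R := le_max_left _ _
      have h2 : F 0 - m + 1 ≤ c * R := by
        rw [div_le_iff₀ hc] at h1; linarith [mul_comm R c]
      have h3 : m + c * ‖θ‖ ≤ F θ := hlow θ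
      have h4 : c * R ≤ c * ‖θ‖ := mul_le_mul_of_nonneg_left hRlt.le hc.le
      have : F 0 < F θ := by linarith
      exact (isMinOn_iff.1 hmin 0 h0mem).trans this.le
  have hmean : ∀ i, meanMap h θ0 i = τ i := by
    intro i
    have hloc : IsLocalMin (fun t : ℝ => F (θ0 + t • (Pi.single i 1 : Fin p → ℝ))) 0 := by
      have h00 : θ0 + (0:ℝ) • (Pi.single i 1 : Fin p → ℝ) = θ0 := by simp
      exact Filter.Eventually.of_forall fun t => by
        show F (θ0 + (0:ℝ) • (Pi.single i 1 : Fin p → ℝ)) ≤ _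
        rw [h00]; exact hglobal _
    have hz := hloc.hasDerivAt_eq_zero (hasDerivAt_line h hpos τ θ0 i)
    linarith [hz]
  exact ⟨θ0, funext hmean⟩

/-- The mean map `τ_*` is a bijection from `ℝ^p` onto the open cube `(0,1)^p`:
its values lie in `(0,1)^p`, and every `τ ∈ (0,1)^p` has a unique preimage. -/
theorem meanMap_bijective_onto_cube {p : ℕ} (hp : 1 ≤ p)
    (h : (Fin p → Bool) → ℝ) (hpos : ∀ x, 0 < h x) :
    (∀ θ : Fin p → ℝ, ∀ i, meanMap h θ i ∈ Set.Ioo (0 : ℝ) 1) ∧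
    (∀ τ : Fin p → ℝ, (∀ i, τ i ∈ Set.Ioo (0 : ℝ) 1) →
      ∃! θ : Fin p → ℝ, meanMap h θ = τ) := by
  refine ⟨fun θ i => meanMap_mem h hpos θ i, fun τ hτ => ?_⟩
  obtain ⟨θ0, hθ0⟩ := exists_theta hp h hpos τ hτ
  exact ⟨θ0, hθ0, fun θ' hθ' => meanMap_injective h hpos (hθ'.trans hθ0.symm)⟩
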